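/- Composite basic construction: for each n ≥ 0, the element f_n = λ^{−n(n+1)/2} (e_{n+1} e_n ⋯ e_1)(e_{n+2} e_{n+1} ⋯ e_2) ⋯ (e_{2n+1} e_{2n} ⋯ e_{n+1}) ∈ M_{2n+1} is an idempotent satisfying: M_{2n+1} = M_n f_n M_n; f_n x f_n = f_n F_n(x) = F_n(x) f_n for all x ∈ M_n; and F_{M_n}(f_n) = λ^{n+1} 1. Hence M_{2n+1}, with idempotent f_n and conditional expectation F_{M_n}, realizes the basic construction of the composite conditional expectation F_n : M_n → N. -/

import Mathlib

/-- The Pimsner–Popa idempotent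
`f_n = λ^{-n(n+1)/2} (e_{n+1} e_n ⋯ e_1)(e_{n+2} ⋯ e_2) ⋯ (e_{2n+1} ⋯ e_{n+1})`. -/
noncomputable def fIdem {k : Type*} [Field k] {R : Type*} [Ring R] [Algebra k R]
    (lam : k) (e : ℕ → R) (n : ℕ) : R :=
  (lam⁻¹ ^ (n * (n + 1) / 2)) •
    (((List.range (n + 1)).map fun j =>
      ((List.range (n + 1)).map fun i => e (n + 1 + j - i)).prod).prod)

/-- The composite conditional expectation
`F_n = E ∘ E_M ∘ ⋯ ∘ E_{M_{n-1}} : M_n → N`. -/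
noncomputable def Fcomp {k : Type*} [Field k] {R : Type*} [Ring R] [Algebra k R]
    (E : R →ₗ[k] R) (Ec : ℕ → R →ₗ[k] R) : ℕ → R →ₗ[k] R
  | 0 => E
  | n + 1 => Fcomp E Ec n ∘ₗ Ec n

/-- The composite conditional expectation
`F_{M_n} = E_{M_n} ∘ ⋯ ∘ E_{M_{2n}} : M_{2n+1} → M_n`. -/
noncomputable def Gcomp {k : Type*} [Field k] {R : Type*} [Ring R] [Algebra k R]
    (Ec : ℕ → R →ₗ[k] R) (n : ℕ) : R →ₗ[k] R :=
  (((List.range (n + 1)).map fun i => Ec (n + i)).foldr (· ∘ₗ ·) LinearMap.id)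

noncomputable section
namespace PP

variable {k : Type*} [Field k] {R : Type*} [Ring R] [Algebra k R]

/-- `Dl e a ℓ = e (a+ℓ-1) * ⋯ * e (a+1) * e a` (decreasing), `1` if `ℓ = 0`. -/
def Dl (e : ℕ → R) (a : ℕ) : ℕ → R
  | 0 => 1
  | ℓ+1 => e (a+ℓ) * Dl e a ℓ

/-- `Ul e a ℓ = e a * e (a+1) * ⋯ * e (a+ℓ-1)` (increasing). -/
def Ul (e : ℕ → R) (a : ℕ) : ℕ → R
  | 0 => 1
  | ℓ+1 => Ul e a ℓ * e (a+ℓ)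

/-- first `m` rows of `P_n` : row `j = Dl e (j+1) (n+1)`. -/
def Pr (e : ℕ → R) (n : ℕ) : ℕ → R
  | 0 => 1
  | m+1 => Pr e n m * Dl e (m+1) (n+1)

def Pw (e : ℕ → R) (n : ℕ) : R := Pr e n (n+1)

def Tri : ℕ → ℕ
  | 0 => 0
  | n+1 => Tri n + (n+1)

lemma two_Tri (n : ℕ) : 2 * Tri n = n * (n+1) := by
  induction n with
  | zero => rfl
  | succ n ih => show 2 * (Tri n + (n+1)) = _ ; rw [Nat.mul_add, ih]; ring

lemma Tri_eq (n : ℕ) : Tri n = n * (n+1) / 2 := by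
  have := two_Tri n; omega

lemma Tri_succ (n : ℕ) : Tri (n+1) = Tri n + (n+1) := rfl

lemma Dl_succ' (e : ℕ → R) (a ℓ : ℕ) : Dl e a (ℓ+1) = Dl e (a+1) ℓ * e a := by
  induction ℓ with
  | zero => show e (a+0) * 1 = 1 * e a; rw [Nat.add_zero, one_mul, mul_one]
  | succ ℓ ih =>
    show e (a+(ℓ+1)) * Dl e a (ℓ+1) = (e (a+1+ℓ) * Dl e (a+1) ℓ) * e a
    have h : a+(ℓ+1) = a+1+ℓ := by omega
    rw [ih, ← mul_assoc, h]

lemma Dl_shift (e : ℕ → R) (a ℓ : ℕ) : Dl (fun i => e (i+1)) a ℓ = Dl e (a+1) ℓ := by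
  induction ℓ with
  | zero => rfl
  | succ ℓ ih =>
    show e (a+ℓ+1) * Dl (fun i => e (i+1)) a ℓ = e (a+1+ℓ) * Dl e (a+1) ℓ
    rw [ih]; congr 2; omega

lemma Ul_head (e : ℕ → R) (a ℓ : ℕ) : Ul e a (ℓ+1) = e a * Ul e (a+1) ℓ := by
  induction ℓ with
  | zero => show 1 * e (a+0) = e a * 1; rw [Nat.add_zero, one_mul, mul_one]
  | succ ℓ ih =>
    show Ul e a (ℓ+1) * e (a+(ℓ+1)) = e a * (Ul e (a+1) ℓ * e (a+1+ℓ))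
    rw [ih, mul_assoc]
    congr 3
    omega

lemma comm_ee (e : ℕ → R) (hco : ∀ i j, 1 ≤ i → i + 2 ≤ j → e i * e j = e j * e i)
    {i j : ℕ} (h1 : 1 ≤ i) (h2 : i + 2 ≤ j) : Commute (e j) (e i) := by
  unfold Commute SemiconjBy
  exact (hco i j h1 h2).symm

lemma swap3 {x y : R} (h : Commute x y) (a : R) : a * x * y = a * y * x := by
  rw [mul_assoc, h.eq, ← mul_assoc]

section Words
variable (e : ℕ → R)

lemma comm_e_Dl_high (hco : ∀ i j, 1 ≤ i → i + 2 ≤ j → e i * e j = e j * e i)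
    {j a : ℕ} (ha : 1 ≤ a) (ℓ : ℕ) (h : a + ℓ + 1 ≤ j) :
    Commute (e j) (Dl e a ℓ) := by
  induction ℓ with
  | zero => exact Commute.one_right _
  | succ ℓ ih =>
    exact Commute.mul_right (comm_ee e hco (by omega) (by omega)) (ih (by omega))

lemma comm_e_Dl_low (hco : ∀ i j, 1 ≤ i → i + 2 ≤ j → e i * e j = e j * e i)
    {j a : ℕ} (hj : 1 ≤ j) (ℓ : ℕ) (h : j + 2 ≤ a) :
    Commute (e j) (Dl e a ℓ) := by
  induction ℓ with
  | zero => exact Commute.one_right _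
  | succ ℓ ih =>
    exact Commute.mul_right (comm_ee e hco hj (by omega)).symm ih

lemma comm_e_Ul_high (hco : ∀ i j, 1 ≤ i → i + 2 ≤ j → e i * e j = e j * e i)
    {j a : ℕ} (ha : 1 ≤ a) (ℓ : ℕ) (h : a + ℓ + 1 ≤ j) :
    Commute (e j) (Ul e a ℓ) := by
  induction ℓ with
  | zero => exact Commute.one_right _
  | succ ℓ ih =>
    exact Commute.mul_right (ih (by omega)) (comm_ee e hco (by omega) (by omega))

lemma comm_e_Ul_low (hco : ∀ i j, 1 ≤ i → i + 2 ≤ j → e i * e j = e j * e i)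
    {j a : ℕ} (hj : 1 ≤ j) (ℓ : ℕ) (h : j + 2 ≤ a) :
    Commute (e j) (Ul e a ℓ) := by
  induction ℓ with
  | zero => exact Commute.one_right _
  | succ ℓ ih =>
    exact Commute.mul_right ih (comm_ee e hco hj (by omega)).symm

lemma comm_e_Pr (hco : ∀ i j, 1 ≤ i → i + 2 ≤ j → e i * e j = e j * e i)
    {j n : ℕ} (m : ℕ) (h : m + n + 2 ≤ j) : Commute (e j) (Pr e n m) := by
  induction m with
  | zero => exact Commute.one_right _
  | succ m ih =>
    exact Commute.mul_right (ih (by omega)) (comm_e_Dl_high e hco (by omega) _ (by omega))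

lemma comm_Ul_x {x : R} (a : ℕ) (ℓ : ℕ) (h : ∀ t, t < ℓ → Commute (e (a+t)) x) :
    Commute (Ul e a ℓ) x := by
  induction ℓ with
  | zero => exact Commute.one_left _
  | succ ℓ ih =>
    exact Commute.mul_left (ih (fun t ht => h t (by omega))) (h ℓ (by omega))

lemma comm_Dl_x {x : R} (a : ℕ) (ℓ : ℕ) (h : ∀ t, t < ℓ → Commute (e (a+t)) x) :
    Commute (Dl e a ℓ) x := by
  induction ℓ with
  | zero => exact Commute.one_left _
  | succ ℓ ih =>
    exact Commute.mul_left (h ℓ (by omega)) (ih (fun t ht => h t (by omega)))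

lemma comm_Pr_x {x : R} (n : ℕ) (m : ℕ) (h : ∀ t, 1 ≤ t → t ≤ m + n → Commute (e t) x) :
    Commute (Pr e n m) x := by
  induction m with
  | zero => exact Commute.one_left _
  | succ m ih =>
    refine Commute.mul_left (ih (fun t h1 h2 => h t h1 (by omega))) ?_
    refine comm_Dl_x e (m+1) (n+1) (fun t ht => h (m+1+t) (by omega) (by omega))

/-- `P_{n+1} = U(n+2,2n+2) ⬝ P_n ⬝ D(n+2,2n+3)`. -/
lemma W1aux (hco : ∀ i j, 1 ≤ i → i + 2 ≤ j → e i * e j = e j * e i)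
    (n : ℕ) : ∀ m : ℕ, Pr e (n+1) m = Ul e (n+2) m * Pr e n m := by
  intro m
  induction m with
  | zero => show (1:R) = 1 * 1; rw [one_mul]
  | succ m ih =>
    show Pr e (n+1) m * Dl e (m+1) (n+2) = Ul e (n+2) (m+1) * Pr e n (m+1)
    have hrow : Dl e (m+1) (n+2) = e (n+2+m) * Dl e (m+1) (n+1) := by
      show Dl e (m+1) (n+1+1) = _
      rw [Dl]; congr 2; omega
    have hc : Commute (e (n+2+m)) (Pr e n m) :=
      comm_e_Pr e hco (j := n+2+m) (n := n) m (by omega)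
    show _ = Ul e (n+2) m * e (n+2+m) * Pr e n (m+1)
    show _ = Ul e (n+2) m * e (n+2+m) * (Pr e n m * Dl e (m+1) (n+1))
    rw [ih, hrow]
    simp only [← mul_assoc]
    rw [swap3 hc.symm]

lemma W1 (hco : ∀ i j, 1 ≤ i → i + 2 ≤ j → e i * e j = e j * e i)
    (n : ℕ) : Pw e (n+1) = Ul e (n+2) (n+1) * Pw e n * Dl e (n+2) (n+2) := by
  show Pr e (n+1) (n+1) * Dl e (n+2) (n+2) = _
  rw [W1aux e hco n (n+1)]
  rfl

/-- `P_{n+1} = P̃_n ⬝ D(n+3,2n+3) ⬝ U(1,n+2)` where `P̃` is the shifted word. -/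
lemma W2aux (hco : ∀ i j, 1 ≤ i → i + 2 ≤ j → e i * e j = e j * e i)
    (n : ℕ) : ∀ m : ℕ, Pr e (n+1) m = Pr (fun i => e (i+1)) n m * Ul e 1 m := by
  intro m
  induction m with
  | zero => show (1:R) = 1 * 1; rw [one_mul]
  | succ m ih =>
    show Pr e (n+1) m * Dl e (m+1) (n+2)
       = (Pr (fun i => e (i+1)) n m * Dl (fun i => e (i+1)) (m+1) (n+1)) * Ul e 1 (m+1)
    have hrow : Dl e (m+1) (n+2) = Dl e (m+2) (n+1) * e (m+1) := Dl_succ' e (m+1) (n+1)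
    have hsh : Dl (fun i => e (i+1)) (m+1) (n+1) = Dl e (m+2) (n+1) := Dl_shift e (m+1) (n+1)
    have hc : Commute (Ul e 1 m) (Dl e (m+2) (n+1)) :=
      comm_Ul_x e 1 m (fun t ht =>
        comm_e_Dl_low e hco (j := 1+t) (a := m+2) (by omega) (n+1) (by omega))
    have hul : Ul e 1 (m+1) = Ul e 1 m * e (m+1) := by
      show _ * e (1+m) = _ * e (m+1); congr 2; omega
    rw [ih, hrow, hsh, hul]
    simp only [← mul_assoc]
    rw [swap3 hc]

lemma W2 (hco : ∀ i j, 1 ≤ i → i + 2 ≤ j → e i * e j = e j * e i)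
    (n : ℕ) :
    Pw e (n+1) = Pw (fun i => e (i+1)) n * (Dl e (n+3) (n+1) * Ul e 1 (n+2)) := by
  show Pr e (n+1) (n+2) = _
  rw [W2aux e hco n (n+2)]
  show (Pr (fun i => e (i+1)) n (n+1) * Dl (fun i => e (i+1)) (n+2) (n+1)) * Ul e 1 (n+2) = _
  rw [Dl_shift e (n+2) (n+1)]
  show (Pw (fun i => e (i+1)) n * Dl e (n+3) (n+1)) * Ul e 1 (n+2) = _
  rw [mul_assoc]

/-- `P_{n+1} = D(1,n+2) ⬝ U(n+3,2n+3) ⬝ P̃_n`. -/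
lemma W3aux (hco : ∀ i j, 1 ≤ i → i + 2 ≤ j → e i * e j = e j * e i)
    (n : ℕ) : ∀ m : ℕ,
    Pr e (n+1) (m+1) = Dl e 1 (n+2) * Ul e (n+3) m * Pr (fun i => e (i+1)) n m := by
  intro m
  induction m with
  | zero =>
    show 1 * Dl e 1 (n+2) = Dl e 1 (n+2) * 1 * 1
    rw [one_mul, mul_one, mul_one]
  | succ m ih =>
    show Pr e (n+1) (m+1) * Dl e (m+2) (n+2)
       = Dl e 1 (n+2) * (Ul e (n+3) m * e (n+3+m))
         * (Pr (fun i => e (i+1)) n m * Dl (fun i => e (i+1)) (m+1) (n+1))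
    have hrow : Dl e (m+2) (n+2) = e (n+3+m) * Dl e (m+2) (n+1) := by
      show Dl e (m+2) (n+1+1) = _
      rw [Dl]; congr 2; omega
    have hsh : Dl (fun i => e (i+1)) (m+1) (n+1) = Dl e (m+2) (n+1) := Dl_shift e (m+1) (n+1)
    have hc : Commute (e (n+3+m)) (Pr (fun i => e (i+1)) n m) := by
      have h : n+3+m = n+2+m+1 := by omega
      rw [h]
      exact comm_e_Pr (fun i => e (i+1))
        (fun i j h1 h2 => hco (i+1) (j+1) (by omega) (by omega)) (j := n+2+m) (n := n) m (by omega)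
    rw [ih, hrow, hsh]
    simp only [← mul_assoc]
    rw [swap3 hc]

lemma W3 (hco : ∀ i j, 1 ≤ i → i + 2 ≤ j → e i * e j = e j * e i)
    (n : ℕ) :
    Pw e (n+1) = Dl e 1 (n+2) * Ul e (n+3) (n+1) * Pw (fun i => e (i+1)) n :=
  W3aux e hco n (n+1)

end Words

section Collapse
variable (e : ℕ → R) (lam : k)

lemma Dl_one (a : ℕ) : Dl e a 1 = e a := by
  show e (a+0) * 1 = e a
  rw [mul_one, Nat.add_zero]

lemma Ul_one (a : ℕ) : Ul e a 1 = e a := by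
  show 1 * e (a+0) = e a
  rw [one_mul, Nat.add_zero]

lemma Dl_head (a ℓ : ℕ) : Dl e a (ℓ+1) = e (a+ℓ) * Dl e a ℓ := rfl

lemma Ul_tail (a ℓ : ℕ) : Ul e a (ℓ+1) = Ul e a ℓ * e (a+ℓ) := rfl

lemma H2 (hb2 : ∀ i, 1 ≤ i → e (i+1) * e i * e (i+1) = lam • e (i+1))
    (a ℓ : ℕ) (ha : 1 ≤ a) :
    Dl e a (ℓ+2) * e (a+1) = lam • Dl e (a+1) (ℓ+1) := by
  have h1 : Dl e a (ℓ+2) = Dl e (a+2) ℓ * e (a+1) * e a := by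
    rw [Dl_succ' e a (ℓ+1), Dl_succ' e (a+1) ℓ]
  have hb := hb2 a ha
  rw [h1, mul_assoc (Dl e (a+2) ℓ * e (a+1)), mul_assoc (Dl e (a+2) ℓ), ← mul_assoc (e (a+1)),
    hb, mul_smul_comm, ← Dl_succ' e (a+1) ℓ]

lemma Lcoll (hb2 : ∀ i, 1 ≤ i → e (i+1) * e i * e (i+1) = lam • e (i+1))
    (a : ℕ) (ha : 1 ≤ a) :
    ∀ j t : ℕ, Dl e (a+1) (j+t+1) * e a * Ul e (a+1) j = lam ^ j • Dl e (a+j) (t+2) := by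
  intro j
  induction j with
  | zero =>
    intro t
    simp only [Nat.zero_add, Nat.add_zero, pow_zero, one_smul, Ul, mul_one]
    rw [← Dl_succ' e a (t+1)]
  | succ j ih =>
    intro t
    have h1 : Ul e (a+1) (j+1) = Ul e (a+1) j * e (a+1+j) := rfl
    have h2 : j+1+t+1 = j+(t+1)+1 := by omega
    rw [h1, h2, ← mul_assoc, mul_assoc _ (e a), ← mul_assoc (Dl e (a+1) (j+(t+1)+1)), ih (t+1)]
    rw [smul_mul_assoc]
    have h3 : a+1+j = a+j+1 := by omega
    have h4 : t+1+2 = t+3 := rfl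
    rw [h3]
    have h5 : Dl e (a+j) (t+3) * e (a+j+1) = lam • Dl e (a+j+1) (t+2) :=
      H2 e lam hb2 (a+j) (t+1) (by omega)
    rw [h5, smul_smul, ← pow_succ]
    have h6 : a+j+1 = a+(j+1) := by omega
    rw [h6]

lemma H4 (hb2 : ∀ i, 1 ≤ i → e (i+1) * e i * e (i+1) = lam • e (i+1))
    (hid : ∀ i, e (i+1) * e (i+1) = e (i+1))
    (a : ℕ) (ha : 1 ≤ a) :
    ∀ m t : ℕ, Dl e a (m+t+1) * Ul e a (m+1) = lam ^ m • Dl e (a+m) (t+1) := by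
  intro m
  induction m with
  | zero =>
    intro t
    obtain ⟨a', rfl⟩ : ∃ a', a = a'+1 := ⟨a-1, by omega⟩
    simp only [Nat.zero_add, Nat.add_zero, pow_zero, one_smul, Ul_one]
    rw [Dl_succ' e (a'+1) t, mul_assoc, hid a', ← Dl_succ' e (a'+1) t]
  | succ m ih =>
    intro t
    have h1 : Ul e a (m+2) = Ul e a (m+1) * e (a+m+1) := by
      show _ = _ * e (a+(m+1))
      rw [← Ul_tail]
    have h2 : m+1+t+1 = m+(t+1)+1 := by omega
    rw [h1, h2, ← mul_assoc, ih (t+1)]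
    rw [smul_mul_assoc, show t+1+1 = t+2 from rfl]
    have h6 : Dl e (a+m) (t+2) * e (a+m+1) = lam • Dl e (a+m+1) (t+1) :=
      H2 e lam hb2 (a+m) t (by omega)
    rw [h6, smul_smul, ← pow_succ]
    have h7 : a+m+1 = a+(m+1) := by omega
    rw [h7]

end Collapse

/-! ### Span helpers -/

lemma span_mul_mem {S : Set R} {T' : Submodule k R} {r y : R}
    (hy : y ∈ Submodule.span k S) (h : ∀ z ∈ S, z * r ∈ T') : y * r ∈ T' := by
  induction hy using Submodule.span_induction with
  | mem z hz => exact h z hz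
  | zero => rw [zero_mul]; exact T'.zero_mem
  | add x y _ _ hx hy => rw [add_mul]; exact T'.add_mem hx hy
  | smul a x _ hx => rw [smul_mul_assoc]; exact T'.smul_mem a hx

lemma mem_mul_span {S : Set R} {T' : Submodule k R} {l y : R}
    (hy : y ∈ Submodule.span k S) (h : ∀ z ∈ S, l * z ∈ T') : l * y ∈ T' := by
  induction hy using Submodule.span_induction with
  | mem z hz => exact h z hz
  | zero => rw [mul_zero]; exact T'.zero_mem
  | add x y _ _ hx hy => rw [mul_add]; exact T'.add_mem hx hy
  | smul a x _ hx => rw [mul_smul_comm]; exact T'.smul_mem a hx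

lemma span_sandwich {S : Set R} {T' : Submodule k R} {l r y : R}
    (hy : y ∈ Submodule.span k S) (h : ∀ z ∈ S, l * z * r ∈ T') : l * y * r ∈ T' := by
  induction hy using Submodule.span_induction with
  | mem z hz => exact h z hz
  | zero => rw [mul_zero, zero_mul]; exact T'.zero_mem
  | add x y _ _ hx hy => rw [mul_add, add_mul]; exact T'.add_mem hx hy
  | smul a x _ hx => rw [mul_smul_comm, smul_mul_assoc]; exact T'.smul_mem a hx

/-! ### The tower structure -/

structure Tw (k : Type*) [Field k] (R : Type*) [Ring R] [Algebra k R] where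
  N : Subalgebra k R
  Ms : ℕ → Subalgebra k R
  e : ℕ → R
  E : R →ₗ[k] R
  Ec : ℕ → R →ₗ[k] R
  lam : k
  hlam : lam ≠ 0
  hNM : N ≤ Ms 0
  hmono : Monotone Ms
  hE_mem : ∀ x ∈ Ms 0, E x ∈ N
  hE_one : E 1 = 1
  he_mem : ∀ i : ℕ, e (i+1) ∈ Ms (i+1)
  he_idem : ∀ i : ℕ, e (i+1) * e (i+1) = e (i+1)
  hgen : ∀ i : ℕ, (Ms (i+1)).toSubmodule
      = Submodule.span k {z : R | ∃ a ∈ Ms i, ∃ b ∈ Ms i, z = a * e (i+1) * b}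
  hEc_mem : ∀ i : ℕ, ∀ x ∈ Ms (i+1), Ec i x ∈ Ms i
  hEc_one : ∀ i : ℕ, Ec i 1 = 1
  hEc_e : ∀ i : ℕ, ∀ x ∈ Ms i, ∀ y ∈ Ms i, Ec i (x * e (i+1) * y) = lam • (x * y)
  hjones0 : ∀ x ∈ Ms 0, e 1 * x * e 1 = E x * e 1
  hjones : ∀ i : ℕ, ∀ x ∈ Ms (i+1), e (i+2) * x * e (i+2) = Ec i x * e (i+2)
  hbraid2 : ∀ i : ℕ, 1 ≤ i → e (i+1) * e i * e (i+1) = lam • e (i+1)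
  hcomm : ∀ i j : ℕ, 1 ≤ i → i + 2 ≤ j → e i * e j = e j * e i
  he1_N : ∀ y ∈ N, e 1 * y = y * e 1
  hcommM : ∀ i : ℕ, ∀ x ∈ Ms i, e (i+2) * x = x * e (i+2)

/-- the composite expectation `F_n = E ∘ Ec 0 ∘ ⋯ ∘ Ec (n-1) : M_n → N`. -/
def Tw.Fcl (T : Tw k R) : ℕ → (R →ₗ[k] R)
  | 0 => T.E
  | n+1 => T.Fcl n ∘ₗ T.Ec n

lemma Tw.Fcl_one (T : Tw k R) : ∀ n : ℕ, T.Fcl n 1 = 1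
  | 0 => T.hE_one
  | n+1 => by
    show T.Fcl n (T.Ec n 1) = 1
    rw [T.hEc_one n]
    exact T.Fcl_one n

lemma Tw.Fcl_mem (T : Tw k R) : ∀ n : ℕ, ∀ x ∈ T.Ms n, T.Fcl n x ∈ T.N
  | 0 => T.hE_mem
  | n+1 => fun x hx => T.Fcl_mem n _ (T.hEc_mem n x hx)

lemma Tw.Fcl_succ_apply (T : Tw k R) (n : ℕ) (x : R) :
    T.Fcl (n+1) x = T.Fcl n (T.Ec n x) := rfl

variable (T : Tw k R)

def Tw.shift : Tw k R where
  N := T.Ms 0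
  Ms := fun i => T.Ms (i+1)
  e := fun i => T.e (i+1)
  E := T.Ec 0
  Ec := fun i => T.Ec (i+1)
  lam := T.lam
  hlam := T.hlam
  hNM := T.hmono (by omega)
  hmono := fun i j h => T.hmono (by omega)
  hE_mem := T.hEc_mem 0
  hE_one := T.hEc_one 0
  he_mem := fun i => T.he_mem (i+1)
  he_idem := fun i => T.he_idem (i+1)
  hgen := fun i => T.hgen (i+1)
  hEc_mem := fun i => T.hEc_mem (i+1)
  hEc_one := fun i => T.hEc_one (i+1)
  hEc_e := fun i => T.hEc_e (i+1)
  hjones0 := T.hjones 0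
  hjones := fun i => T.hjones (i+1)
  hbraid2 := fun i hi => T.hbraid2 (i+1) (by omega)
  hcomm := fun i j hi hij => T.hcomm (i+1) (j+1) (by omega) (by omega)
  he1_N := fun y hy => T.hcommM 0 y hy
  hcommM := fun i => T.hcommM (i+1)

@[simp] lemma Tw.shift_e : T.shift.e = fun i => T.e (i+1) := rfl
@[simp] lemma Tw.shift_Ms : T.shift.Ms = fun i => T.Ms (i+1) := rfl
@[simp] lemma Tw.shift_lam : T.shift.lam = T.lam := rfl

/-- memberships -/
lemma Tw.e_mem' {j m : ℕ} (h1 : 1 ≤ j) (h : j ≤ m) : T.e j ∈ T.Ms m := by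
  obtain ⟨i, rfl⟩ : ∃ i, j = i+1 := ⟨j-1, by omega⟩
  exact T.hmono h (T.he_mem i)

lemma Tw.Dl_mem {a m : ℕ} (ha : 1 ≤ a) (ℓ : ℕ) (h : a + ℓ ≤ m + 1) :
    Dl T.e a ℓ ∈ T.Ms m := by
  induction ℓ with
  | zero => exact one_mem _
  | succ ℓ ih =>
    exact mul_mem (T.e_mem' (by omega) (by omega)) (ih (by omega))

lemma Tw.Ul_mem {a m : ℕ} (ha : 1 ≤ a) (ℓ : ℕ) (h : a + ℓ ≤ m + 1) :
    Ul T.e a ℓ ∈ T.Ms m := by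
  induction ℓ with
  | zero => exact one_mem _
  | succ ℓ ih =>
    exact mul_mem (ih (by omega)) (T.e_mem' (by omega) (by omega))

lemma Tw.Pr_mem (n : ℕ) : ∀ m : ℕ, Pr T.e n m ∈ T.Ms (m + n) := by
  intro m
  induction m with
  | zero => exact one_mem _
  | succ m ih =>
    refine mul_mem (T.hmono (by omega) ih) (T.Dl_mem (by omega) (n+1) (by omega))

lemma Tw.Pw_mem (n : ℕ) : Pw T.e n ∈ T.Ms (2*n+1) := by
  have := T.Pr_mem n (n+1)
  exact T.hmono (by omega) this

/-- commutation of `e j` with elements of `Ms m`, `m + 2 ≤ j`. -/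
lemma Tw.x_comm_e {x : R} {m j : ℕ} (hx : x ∈ T.Ms m) (h : m + 2 ≤ j) :
    Commute x (T.e j) := by
  obtain ⟨i, rfl⟩ : ∃ i, j = i+2 := ⟨j-2, by omega⟩
  have : x ∈ T.Ms i := T.hmono (by omega) hx
  unfold Commute SemiconjBy
  exact (T.hcommM i x this).symm

/-- commutation of elements of `N` with every `e j`, `j ≥ 1`. -/
lemma Tw.N_comm_e {y : R} (hy : y ∈ T.N) {j : ℕ} (hj : 1 ≤ j) :
    Commute y (T.e j) := by
  rcases Nat.lt_or_ge j 2 with h | h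
  · have h1 : j = 1 := by omega
    subst h1
    unfold Commute SemiconjBy
    exact (T.he1_N y hy).symm
  · exact T.x_comm_e (T.hNM hy) (by omega)

lemma Tw.N_comm_Dl {y : R} (hy : y ∈ T.N) {a : ℕ} (ha : 1 ≤ a) (ℓ : ℕ) :
    Commute y (Dl T.e a ℓ) := by
  induction ℓ with
  | zero => exact Commute.one_right _
  | succ ℓ ih => exact Commute.mul_right (T.N_comm_e hy (by omega)) ih

lemma Tw.N_comm_Ul {y : R} (hy : y ∈ T.N) {a : ℕ} (ha : 1 ≤ a) (ℓ : ℕ) :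
    Commute y (Ul T.e a ℓ) := by
  induction ℓ with
  | zero => exact Commute.one_right _
  | succ ℓ ih => exact Commute.mul_right ih (T.N_comm_e hy (by omega))

lemma Tw.N_comm_Pr {y : R} (hy : y ∈ T.N) (n m : ℕ) :
    Commute y (Pr T.e n m) := by
  induction m with
  | zero => exact Commute.one_right _
  | succ m ih => exact Commute.mul_right ih (T.N_comm_Dl hy (by omega) (n+1))

lemma Tw.N_comm_Pw {y : R} (hy : y ∈ T.N) (n : ℕ) :
    Commute y (Pw T.e n) := T.N_comm_Pr hy n (n+1)

lemma Tw.x_comm_Dl {x : R} {m a : ℕ} (hx : x ∈ T.Ms m) (h : m + 2 ≤ a) (ℓ : ℕ) :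
    Commute x (Dl T.e a ℓ) := by
  induction ℓ with
  | zero => exact Commute.one_right _
  | succ ℓ ih => exact Commute.mul_right (T.x_comm_e hx (by omega)) ih

lemma Tw.x_comm_Ul {x : R} {m a : ℕ} (hx : x ∈ T.Ms m) (h : m + 2 ≤ a) (ℓ : ℕ) :
    Commute x (Ul T.e a ℓ) := by
  induction ℓ with
  | zero => exact Commute.one_right _
  | succ ℓ ih => exact Commute.mul_right ih (T.x_comm_e hx (by omega))

/-- converting `hgen` into span membership -/
lemma Tw.mem_spanGen {i : ℕ} {x : R} (hx : x ∈ T.Ms (i+1)) :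
    x ∈ Submodule.span k {z : R | ∃ a ∈ T.Ms i, ∃ b ∈ T.Ms i, z = a * T.e (i+1) * b} := by
  rw [← T.hgen i]
  exact hx

/-! ### the two main statements, by simultaneous induction -/

lemma swapR {x y : R} (h : Commute x y) (z : R) : x * (y * z) = y * (x * z) := by
  rw [← mul_assoc, h.eq, mul_assoc]

def Isp (T : Tw k R) (n : ℕ) : Prop :=
  ∀ x ∈ T.Ms n, Pw T.e n * x * Pw T.e n = (T.lam ^ Tri n) • (T.Fcl n x * Pw T.e n)

def SPset (T : Tw k R) (n : ℕ) : Set R :=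
  {z : R | ∃ a ∈ T.Ms n, ∃ b ∈ T.Ms n, z = a * Pw T.e n * b}

def IIIsp (T : Tw k R) (n : ℕ) : Prop :=
  (T.Ms (2*n+1)).toSubmodule = Submodule.span k (SPset T n)

def SPl (T : Tw k R) (n : ℕ) : Set R := {z : R | ∃ m ∈ T.Ms n, z = m * Pw T.e n}
def SPr (T : Tw k R) (n : ℕ) : Set R := {z : R | ∃ m ∈ T.Ms n, z = Pw T.e n * m}

lemma Fcl_in_Ms (T : Tw k R) {n m : ℕ} {x : R} (hx : x ∈ T.Ms n) :
    T.Fcl n x ∈ T.Ms m :=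
  T.hmono (Nat.zero_le m) (T.hNM (T.Fcl_mem n x hx))

lemma IIl (T : Tw k R) (n : ℕ) (hI : Isp T n) (hIII : IIIsp T n) :
    ∀ x ∈ T.Ms (2*n+1), x * Pw T.e n ∈ Submodule.span k (SPl T n) := by
  intro x hx
  have hx' : x ∈ (T.Ms (2*n+1)).toSubmodule := hx
  rw [hIII] at hx'
  refine span_mul_mem hx' ?_
  rintro z ⟨a, ha, b, hb, rfl⟩
  have h1 : a * Pw T.e n * b * Pw T.e n = a * (Pw T.e n * b * Pw T.e n) := by
    simp only [mul_assoc]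
  rw [h1, hI b hb, mul_smul_comm]
  refine Submodule.smul_mem _ _ (Submodule.subset_span
    ⟨a * T.Fcl n b, mul_mem ha (Fcl_in_Ms T hb), (mul_assoc _ _ _).symm⟩)

lemma IIr (T : Tw k R) (n : ℕ) (hI : Isp T n) (hIII : IIIsp T n) :
    ∀ x ∈ T.Ms (2*n+1), Pw T.e n * x ∈ Submodule.span k (SPr T n) := by
  intro x hx
  have hx' : x ∈ (T.Ms (2*n+1)).toSubmodule := hx
  rw [hIII] at hx'
  refine mem_mul_span hx' ?_
  rintro z ⟨a, ha, b, hb, rfl⟩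
  have h1 : Pw T.e n * (a * Pw T.e n * b) = Pw T.e n * a * Pw T.e n * b := by
    simp only [mul_assoc]
  rw [h1, hI a ha, smul_mul_assoc]
  have h2 : T.Fcl n a * Pw T.e n * b = Pw T.e n * (T.Fcl n a * b) := by
    rw [(T.N_comm_Pw (T.Fcl_mem n a ha) n).eq, mul_assoc]
  rw [h2]
  refine Submodule.smul_mem _ _ (Submodule.subset_span
    ⟨T.Fcl n a * b, mul_mem (Fcl_in_Ms T ha) hb, rfl⟩)

lemma absL (T : Tw k R) (n : ℕ) (hIs : Isp T.shift n) (hIIIs : IIIsp T.shift n) :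
    ∀ c ∈ T.Ms (2*n+2), c * Pw T.e (n+1) ∈ Submodule.span k (SPl T (n+1)) := by
  intro c hc
  have hW2 := W2 T.e T.hcomm n
  have hc' : c ∈ T.shift.Ms (2*n+1) := by
    show c ∈ T.Ms (2*n+1+1)
    rw [show 2*n+1+1 = 2*n+2 by omega]
    exact hc
  have h1 := IIl T.shift n hIs hIIIs c hc'
  have h2 : c * Pw T.e (n+1)
      = (c * Pw T.shift.e n) * (Dl T.e (n+3) (n+1) * Ul T.e 1 (n+2)) := by
    rw [hW2, ← mul_assoc]
    rfl
  rw [h2]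
  refine span_mul_mem h1 ?_
  rintro z ⟨m, hm, rfl⟩
  refine Submodule.subset_span ⟨m, hm, ?_⟩
  rw [hW2]
  simp only [Tw.shift_e, mul_assoc]

lemma absR (T : Tw k R) (n : ℕ) (hIs : Isp T.shift n) (hIIIs : IIIsp T.shift n) :
    ∀ d ∈ T.Ms (2*n+2), Pw T.e (n+1) * d ∈ Submodule.span k (SPr T (n+1)) := by
  intro d hd
  have hW3 := W3 T.e T.hcomm n
  have hd' : d ∈ T.shift.Ms (2*n+1) := by
    show d ∈ T.Ms (2*n+1+1)
    rw [show 2*n+1+1 = 2*n+2 by omega]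
    exact hd
  have h1 := IIr T.shift n hIs hIIIs d hd'
  have h2 : Pw T.e (n+1) * d
      = (Dl T.e 1 (n+2) * Ul T.e (n+3) (n+1)) * (Pw T.shift.e n * d) := by
    rw [hW3, mul_assoc]
    rfl
  rw [h2]
  refine mem_mul_span h1 ?_
  rintro z ⟨m, hm, rfl⟩
  refine Submodule.subset_span ⟨m, hm, ?_⟩
  rw [hW3]
  simp only [Tw.shift_e, mul_assoc]

lemma braidR {lam : k} {x y : R} (h : x * y * x = lam • x) (z : R) :
    x * (y * (x * z)) = lam • (x * z) := by
  rw [← mul_assoc, ← mul_assoc, h, smul_mul_assoc]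

lemma comm_e_Pw (e : ℕ → R) (hco : ∀ i j, 1 ≤ i → i + 2 ≤ j → e i * e j = e j * e i)
    (n : ℕ) {j : ℕ} (h : 2*n+3 ≤ j) : Commute (e j) (Pw e n) := by
  unfold Pw
  exact comm_e_Pr e hco (j := j) (n := n) (n+1) (by omega)

lemma Pw_zero (e : ℕ → R) : Pw e 0 = e 1 := by
  show Pr e 0 0 * Dl e 1 1 = e 1
  rw [Dl_one]
  exact one_mul _

lemma Ibase (T : Tw k R) : Isp T 0 := by
  intro x hx
  rw [Pw_zero T.e]
  show T.e 1 * x * T.e 1 = T.lam ^ Tri 0 • (T.Fcl 0 x * T.e 1)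
  rw [show Tri 0 = 0 from rfl, pow_zero, one_smul]
  exact T.hjones0 x hx

lemma IIIbase (T : Tw k R) : IIIsp T 0 := by
  unfold IIIsp SPset
  simp only [Pw_zero T.e]
  exact T.hgen 0

lemma Istep (T : Tw k R) (n : ℕ) (hI : Isp T n) : Isp T (n+1) := by
  intro x hx
  have hW1 := W1 T.e T.hcomm n
  set P := Pw T.e n with hPdef
  set A := Ul T.e (n+2) (n+1) with hAdef
  set B := Dl T.e (n+2) (n+2) with hBdef
  have hy : T.Ec n x ∈ T.Ms n := T.hEc_mem n x hx
  set y := T.Ec n x with hydef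
  have hB1 : B = Dl T.e (n+3) (n+1) * T.e (n+2) := Dl_succ' T.e (n+2) (n+1)
  have hA1 : A = T.e (n+2) * Ul T.e (n+3) n := Ul_head T.e (n+2) n
  have hB2 : B = T.e (2*n+3) * Dl T.e (n+2) (n+1) := by
    rw [hBdef, show (2*n+3) = (n+2)+(n+1) by omega]
    rfl
  have hJ : T.e (n+2) * x * T.e (n+2) = y * T.e (n+2) := T.hjones n x hx
  have hyD : Commute y (Dl T.e (n+3) (n+1)) := T.x_comm_Dl hy (by omega) (n+1)
  have hL : Dl T.e (n+3) (n+1) * T.e (n+2) * Ul T.e (n+3) n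
      = T.lam ^ n • (T.e (2*n+3) * T.e (2*n+2)) := by
    have h := Lcoll T.e T.lam T.hbraid2 (n+2) (by omega) n 0
    rw [show n+0+1 = n+1 from rfl] at h
    rw [show n+2+n = 2*n+2 by omega] at h
    rw [h]
    congr 1
    rw [show Dl T.e (2*n+2) 2 = T.e (2*n+2+1) * Dl T.e (2*n+2) 1 from rfl, Dl_one,
      show 2*n+2+1 = 2*n+3 by omega]
  have step1 : ∀ z : R, B * (x * (A * z))
      = T.lam ^ n • (y * (T.e (2*n+3) * (T.e (2*n+2) * z))) := by
    intro z
    have h1 : B * (x * (A * z))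
        = Dl T.e (n+3) (n+1) * ((T.e (n+2) * x * T.e (n+2)) * (Ul T.e (n+3) n * z)) := by
      rw [hB1, hA1]; simp only [mul_assoc]
    rw [h1, hJ]
    have h2 : Dl T.e (n+3) (n+1) * (y * T.e (n+2) * (Ul T.e (n+3) n * z))
        = y * (Dl T.e (n+3) (n+1) * T.e (n+2) * Ul T.e (n+3) n * z) := by
      simp only [mul_assoc]
      rw [swapR hyD.symm]
    rw [h2, hL, smul_mul_assoc, mul_smul_comm]
    simp only [mul_assoc]
  have hPE3 : Commute (T.e (2*n+3)) P := comm_e_Pw T.e T.hcomm n (by omega)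
  have hbr : T.e (2*n+3) * T.e (2*n+2) * T.e (2*n+3) = T.lam • T.e (2*n+3) := by
    have h := T.hbraid2 (2*n+2) (by omega)
    rw [show 2*n+2+1 = 2*n+3 by omega] at h
    exact h
  have hFA : Commute (T.Fcl n y) A := T.N_comm_Ul (T.Fcl_mem n y hy) (by omega) (n+1)
  calc Pw T.e (n+1) * x * Pw T.e (n+1)
      = A * (P * (B * (x * (A * (P * B))))) := by rw [hW1]; simp only [mul_assoc]
    _ = A * (P * (T.lam ^ n • (y * (T.e (2*n+3) * (T.e (2*n+2) * (P * B)))))) := by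
        rw [step1 (P * B)]
    _ = T.lam ^ n • (A * (P * (y * (T.e (2*n+3) * (T.e (2*n+2) * (T.e (2*n+3) * (P * Dl T.e (n+2) (n+1)))))))) := by
        rw [hB2, swapR hPE3.symm (Dl T.e (n+2) (n+1))]
        simp only [mul_smul_comm]
    _ = T.lam ^ n • (T.lam • (A * (P * (y * (T.e (2*n+3) * (P * Dl T.e (n+2) (n+1))))))) := by
        rw [braidR hbr (P * Dl T.e (n+2) (n+1))]
        simp only [mul_smul_comm]
    _ = T.lam ^ n • (T.lam • (A * (P * (y * (P * (T.e (2*n+3) * Dl T.e (n+2) (n+1))))))) := by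
        rw [swapR hPE3 (Dl T.e (n+2) (n+1))]
    _ = T.lam ^ n • (T.lam • (A * ((P * y * P) * (T.e (2*n+3) * Dl T.e (n+2) (n+1))))) := by
        simp only [mul_assoc]
    _ = T.lam ^ n • (T.lam • (T.lam ^ Tri n • (A * ((T.Fcl n y * P) * (T.e (2*n+3) * Dl T.e (n+2) (n+1)))))) := by
        rw [hI y hy]
        simp only [mul_smul_comm, smul_mul_assoc]
        rfl
    _ = T.lam ^ Tri (n+1) • (T.Fcl (n+1) x * Pw T.e (n+1)) := by
        rw [hW1, hB2, T.Fcl_succ_apply]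
        simp only [smul_smul, mul_assoc]
        rw [swapR hFA.symm (P * (T.e (2*n+3) * Dl T.e (n+2) (n+1)))]
        congr 1
        rw [Tri_succ, pow_add]
        ring

lemma P1_eq_AKD (T : Tw k R) (n : ℕ) :
    Pw T.e (n+1) = Ul T.e (n+2) n *
      ((T.e (2*n+2) * (Pw T.e n * (T.e (2*n+3) * T.e (2*n+2)))) * Dl T.e (n+2) n) := by
  rw [W1 T.e T.hcomm n]
  have hA : Ul T.e (n+2) (n+1) = Ul T.e (n+2) n * T.e (2*n+2) := by
    show Ul T.e (n+2) n * T.e ((n+2)+n) = _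
    rw [show (n+2)+n = 2*n+2 by omega]
  have hB : Dl T.e (n+2) (n+2) = T.e (2*n+3) * (T.e (2*n+2) * Dl T.e (n+2) n) := by
    show T.e ((n+2)+(n+1)) * (T.e ((n+2)+n) * Dl T.e (n+2) n) = _
    rw [show (n+2)+(n+1) = 2*n+3 by omega, show (n+2)+n = 2*n+2 by omega]
  rw [hA, hB]
  simp only [mul_assoc]

lemma KresL (T : Tw k R) (m : ℕ) (hI : Isp T (m+1)) (hIII : IIIsp T (m+1)) :
    T.e (2*m+4) * (Pw T.e (m+1) * (T.e (2*m+5) * T.e (2*m+4)))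
      ∈ Submodule.span k {z : R | ∃ c ∈ T.Ms (2*m+3),
          z = c * (Ul T.e (m+3) (m+1) *
            (T.e (2*m+4) * (Pw T.e (m+1) * (T.e (2*m+5) * T.e (2*m+4)))))} := by
  have hres : Dl T.e (m+3) (m+1) * Ul T.e (m+3) (m+1) = T.lam ^ m • T.e (2*m+3) := by
    have h := H4 T.e T.lam T.hbraid2 T.he_idem (m+3) (by omega) m 0
    rw [show m+0+1 = m+1 from rfl, Dl_one] at h
    rw [h, show m+3+m = 2*m+3 by omega]
  have hone : (1:R) ∈ Submodule.span k
      {z : R | ∃ a ∈ T.Ms (2*m+2), ∃ b ∈ T.Ms (2*m+2), z = a * T.e (2*m+2+1) * b} :=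
    T.mem_spanGen (i := 2*m+2) (one_mem _)
  have hIIl : ∀ b ∈ T.Ms (2*m+3), b * Pw T.e (m+1)
      ∈ Submodule.span k (SPl T (m+1)) := by
    intro b hb
    refine IIl T (m+1) hI hIII b ?_
    rwa [show 2*(m+1)+1 = 2*m+3 by omega]
  suffices hsf : (1:R) * (T.e (2*m+4) * (Pw T.e (m+1) * (T.e (2*m+5) * T.e (2*m+4))))
      ∈ Submodule.span k {z : R | ∃ c ∈ T.Ms (2*m+3),
          z = c * (Ul T.e (m+3) (m+1) *
            (T.e (2*m+4) * (Pw T.e (m+1) * (T.e (2*m+5) * T.e (2*m+4)))))} by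
    rwa [one_mul] at hsf
  refine span_mul_mem hone ?_
  rintro z ⟨a, ha, b, hb, rfl⟩
  have hb2 : Commute (T.e (2*m+4)) b := (T.x_comm_e hb (by omega)).symm
  have h1 : a * T.e (2*m+2+1) * b * (T.e (2*m+4) * (Pw T.e (m+1) * (T.e (2*m+5) * T.e (2*m+4))))
      = (a * T.e (2*m+3) * T.e (2*m+4)) * (b * Pw T.e (m+1)) * (T.e (2*m+5) * T.e (2*m+4)) := by
    rw [show 2*m+2+1 = 2*m+3 by omega]
    simp only [mul_assoc]
    rw [swapR hb2]
  rw [h1]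
  refine span_sandwich (hIIl b (T.hmono (by omega) hb)) ?_
  rintro z ⟨mm, hmm, rfl⟩
  have hm21 : Commute (T.e (2*m+3)) mm := (T.x_comm_e hmm (by omega)).symm
  have hm2 : Commute (T.e (2*m+4)) mm := (T.x_comm_e hmm (by omega)).symm
  have h4 : (a * T.e (2*m+3) * T.e (2*m+4)) * (mm * Pw T.e (m+1)) * (T.e (2*m+5) * T.e (2*m+4))
      = (a * mm) * (T.e (2*m+3) *
          (T.e (2*m+4) * (Pw T.e (m+1) * (T.e (2*m+5) * T.e (2*m+4))))) := by
    simp only [mul_assoc]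
    rw [swapR hm2, swapR hm21]
  rw [h4]
  have h6 : Dl T.e (m+3) (m+1) * (Ul T.e (m+3) (m+1) *
        (T.e (2*m+4) * (Pw T.e (m+1) * (T.e (2*m+5) * T.e (2*m+4)))))
      = T.lam ^ m • (T.e (2*m+3) *
        (T.e (2*m+4) * (Pw T.e (m+1) * (T.e (2*m+5) * T.e (2*m+4))))) := by
    rw [← mul_assoc, hres, smul_mul_assoc]
  have h5 : T.e (2*m+3) * (T.e (2*m+4) * (Pw T.e (m+1) * (T.e (2*m+5) * T.e (2*m+4))))
      = (T.lam ^ m)⁻¹ • (Dl T.e (m+3) (m+1) * (Ul T.e (m+3) (m+1) *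
          (T.e (2*m+4) * (Pw T.e (m+1) * (T.e (2*m+5) * T.e (2*m+4)))))) := by
    rw [h6, inv_smul_smul₀ (pow_ne_zero m T.hlam)]
  rw [h5, mul_smul_comm]
  refine Submodule.smul_mem _ _ (Submodule.subset_span
    ⟨a * mm * Dl T.e (m+3) (m+1), ?_, ?_⟩)
  · exact mul_mem (mul_mem (T.hmono (by omega) ha) (T.hmono (by omega) hmm))
      (T.Dl_mem (by omega) (m+1) (by omega))
  · simp only [mul_assoc]

lemma KresR (T : Tw k R) (m : ℕ) (hI : Isp T (m+1)) (hIII : IIIsp T (m+1)) :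
    T.e (2*m+4) * (Pw T.e (m+1) * (T.e (2*m+5) * T.e (2*m+4)))
      ∈ Submodule.span k {z : R | ∃ d ∈ T.Ms (2*m+3),
          z = (T.e (2*m+4) * (Pw T.e (m+1) * (T.e (2*m+5) * T.e (2*m+4))))
              * Dl T.e (m+3) (m+1) * d} := by
  have hres : Dl T.e (m+3) (m+1) * Ul T.e (m+3) (m+1) = T.lam ^ m • T.e (2*m+3) := by
    have h := H4 T.e T.lam T.hbraid2 T.he_idem (m+3) (by omega) m 0
    rw [show m+0+1 = m+1 from rfl, Dl_one] at h
    rw [h, show m+3+m = 2*m+3 by omega]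
  have hone : (1:R) ∈ Submodule.span k
      {z : R | ∃ a ∈ T.Ms (2*m+2), ∃ b ∈ T.Ms (2*m+2), z = a * T.e (2*m+2+1) * b} :=
    T.mem_spanGen (i := 2*m+2) (one_mem _)
  have hIIr : ∀ b ∈ T.Ms (2*m+3), Pw T.e (m+1) * b
      ∈ Submodule.span k (SPr T (m+1)) := by
    intro b hb
    refine IIr T (m+1) hI hIII b ?_
    rwa [show 2*(m+1)+1 = 2*m+3 by omega]
  suffices hsf : (T.e (2*m+4) * (Pw T.e (m+1) * (T.e (2*m+5) * T.e (2*m+4)))) * 1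
      ∈ Submodule.span k {z : R | ∃ d ∈ T.Ms (2*m+3),
          z = (T.e (2*m+4) * (Pw T.e (m+1) * (T.e (2*m+5) * T.e (2*m+4))))
              * Dl T.e (m+3) (m+1) * d} by
    rwa [mul_one] at hsf
  refine mem_mul_span hone ?_
  rintro z ⟨a, ha, b, hb, rfl⟩
  have ha2 : Commute (T.e (2*m+4)) a := (T.x_comm_e ha (by omega)).symm
  have ha3 : Commute (T.e (2*m+5)) a := (T.x_comm_e ha (by omega)).symm
  have h1 : (T.e (2*m+4) * (Pw T.e (m+1) * (T.e (2*m+5) * T.e (2*m+4)))) * (a * T.e (2*m+2+1) * b)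
      = T.e (2*m+4) * (Pw T.e (m+1) * a) * (T.e (2*m+5) * (T.e (2*m+4) * (T.e (2*m+3) * b))) := by
    rw [show 2*m+2+1 = 2*m+3 by omega]
    simp only [mul_assoc]
    rw [swapR ha2, swapR ha3]
  rw [h1]
  refine span_sandwich (hIIr a (T.hmono (by omega) ha)) ?_
  rintro z ⟨mm, hmm, rfl⟩
  have hm21 : Commute mm (T.e (2*m+3)) := T.x_comm_e hmm (by omega)
  have hm2 : Commute mm (T.e (2*m+4)) := T.x_comm_e hmm (by omega)
  have hm3 : Commute mm (T.e (2*m+5)) := T.x_comm_e hmm (by omega)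
  have h4 : T.e (2*m+4) * (Pw T.e (m+1) * mm) * (T.e (2*m+5) * (T.e (2*m+4) * (T.e (2*m+3) * b)))
      = T.e (2*m+4) * (Pw T.e (m+1) * (T.e (2*m+5) * T.e (2*m+4)))
          * (T.e (2*m+3) * (mm * b)) := by
    simp only [mul_assoc]
    rw [swapR hm3, swapR hm2, swapR hm21]
  rw [h4]
  have h6 : T.e (2*m+4) * (Pw T.e (m+1) * (T.e (2*m+5) * T.e (2*m+4)))
          * (Dl T.e (m+3) (m+1) * (Ul T.e (m+3) (m+1) * (mm * b)))
      = T.lam ^ m • (T.e (2*m+4) * (Pw T.e (m+1) * (T.e (2*m+5) * T.e (2*m+4)))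
          * (T.e (2*m+3) * (mm * b))) := by
    rw [← mul_assoc (Dl T.e (m+3) (m+1)), hres, smul_mul_assoc, mul_smul_comm]
  have h5 : T.e (2*m+4) * (Pw T.e (m+1) * (T.e (2*m+5) * T.e (2*m+4)))
          * (T.e (2*m+3) * (mm * b))
      = (T.lam ^ m)⁻¹ • (T.e (2*m+4) * (Pw T.e (m+1) * (T.e (2*m+5) * T.e (2*m+4)))
          * (Dl T.e (m+3) (m+1) * (Ul T.e (m+3) (m+1) * (mm * b)))) := by
    rw [h6, inv_smul_smul₀ (pow_ne_zero m T.hlam)]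
  rw [h5]
  refine Submodule.smul_mem _ _ (Submodule.subset_span
    ⟨Ul T.e (m+3) (m+1) * (mm * b), ?_, ?_⟩)
  · exact mul_mem (T.Ul_mem (by omega) (m+1) (by omega))
      (mul_mem (T.hmono (by omega) hmm) (T.hmono (by omega) hb))
  · simp only [mul_assoc]

lemma Kmid (T : Tw k R) (n : ℕ) (hI : Isp T n) (hIII : IIIsp T n) :
    T.e (2*n+2) * (Pw T.e n * (T.e (2*n+3) * T.e (2*n+2)))
      ∈ Submodule.span k {z : R | ∃ c ∈ T.Ms (2*n+1), ∃ d ∈ T.Ms (2*n+1),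
          z = c * Pw T.e (n+1) * d} := by
  cases n with
  | zero =>
    refine Submodule.subset_span ⟨1, one_mem _, 1, one_mem _, ?_⟩
    rw [one_mul, mul_one, Pw_zero]
    have hP1 : Pw T.e (0+1) = T.e 2 * (T.e 1 * (T.e 3 * T.e 2)) := by
      show ((1:R) * (T.e (1+1) * (T.e (1+0) * 1))) * (T.e (2+1) * (T.e (2+0) * 1)) = _
      simp only [one_mul, mul_one, mul_assoc]
    rw [hP1]
  | succ m =>
    simp only [show 2*(m+1)+2 = 2*m+4 by omega, show 2*(m+1)+3 = 2*m+5 by omega,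
      show 2*(m+1)+1 = 2*m+3 by omega, show m+1+1 = m+2 by omega]
    have hP1K : Pw T.e (m+2) = Ul T.e (m+3) (m+1) *
        ((T.e (2*m+4) * (Pw T.e (m+1) * (T.e (2*m+5) * T.e (2*m+4)))) * Dl T.e (m+3) (m+1)) := by
      have h := P1_eq_AKD T (m+1)
      simp only [show m+1+2 = m+3 by omega, show 2*(m+1)+2 = 2*m+4 by omega,
        show 2*(m+1)+3 = 2*m+5 by omega, show m+1+1 = m+2 by omega] at h
      exact h
    refine Submodule.span_le.mpr ?_ (KresL T m hI hIII)
    rintro z ⟨c, hc, rfl⟩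
    rw [show c * (Ul T.e (m+3) (m+1) *
          (T.e (2*m+4) * (Pw T.e (m+1) * (T.e (2*m+5) * T.e (2*m+4)))))
        = (c * Ul T.e (m+3) (m+1)) *
          (T.e (2*m+4) * (Pw T.e (m+1) * (T.e (2*m+5) * T.e (2*m+4)))) from
      (mul_assoc _ _ _).symm]
    refine mem_mul_span (KresR T m hI hIII) ?_
    rintro z ⟨d, hd, rfl⟩
    refine Submodule.subset_span ⟨c, hc, d, hd, ?_⟩
    rw [hP1K]
    simp only [mul_assoc]

lemma IIIstep (T : Tw k R) (n : ℕ) (hI : Isp T n) (hIII : IIIsp T n)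
    (hIs : Isp T.shift n) (hIIIs : IIIsp T.shift n) : IIIsp T (n+1) := by
  refine le_antisymm ?hle ?hge
  case hge =>
    refine Submodule.span_le.mpr ?_
    rintro z ⟨a, ha, b, hb, rfl⟩
    show a * Pw T.e (n+1) * b ∈ T.Ms (2*(n+1)+1)
    exact mul_mem (mul_mem (T.hmono (by omega) ha) (T.Pw_mem (n+1))) (T.hmono (by omega) hb)
  case hle =>
    intro x hx
    have hKmid := Kmid T n hI hIII
    have habsL := absL T n hIs hIIIs
    have habsR := absR T n hIs hIIIs
    have hbig : ∀ c ∈ T.Ms (2*n+1), ∀ d ∈ T.Ms (2*n+1),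
        c * Pw T.e (n+1) * d ∈ Submodule.span k (SPset T (n+1)) := by
      intro c hc d hd
      refine span_mul_mem (habsL c (T.hmono (by omega) hc)) ?_
      rintro z ⟨mm, hmm, rfl⟩
      rw [mul_assoc]
      refine mem_mul_span (habsR d (T.hmono (by omega) hd)) ?_
      rintro z ⟨mm', hmm', rfl⟩
      exact Submodule.subset_span ⟨mm, hmm, mm', hmm', (mul_assoc _ _ _).symm⟩
    have hKfull : ∀ L ∈ T.Ms (2*n+1), ∀ r ∈ T.Ms (2*n+1),
        L * ((T.e (2*n+2) * (Pw T.e n * (T.e (2*n+3) * T.e (2*n+2)))) * r)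
          ∈ Submodule.span k (SPset T (n+1)) := by
      intro L hL r hr
      rw [← mul_assoc]
      refine span_sandwich hKmid ?_
      rintro z ⟨c, hc, d, hd, rfl⟩
      have h : L * (c * Pw T.e (n+1) * d) * r = (L*c) * Pw T.e (n+1) * (d*r) := by
        simp only [mul_assoc]
      rw [h]
      exact hbig _ (mul_mem hL hc) _ (mul_mem hd hr)
    have hPE3 : Commute (T.e (2*n+3)) (Pw T.e n) := comm_e_Pw T.e T.hcomm n (by omega)
    have hcore : ∀ aa ∈ T.Ms (2*n+1), ∀ w ∈ T.Ms (2*n+1), ∀ dd ∈ T.Ms (2*n+1),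
        (aa * (T.e (2*n+2) * T.e (2*n+3))) * w * (T.e (2*n+2) * dd)
          ∈ Submodule.span k (SPset T (n+1)) := by
      intro aa haa w hw dd hdd
      have hw' : w ∈ Submodule.span k (SPset T n) := by
        have h0 : w ∈ (T.Ms (2*n+1)).toSubmodule := hw
        rwa [hIII] at h0
      refine span_sandwich hw' ?_
      rintro z ⟨u, hu, v, hv, rfl⟩
      have h1 : Commute (T.e (2*n+3)) u := (T.x_comm_e hu (by omega)).symm
      have h2 : Commute (T.e (2*n+2)) u := (T.x_comm_e hu (by omega)).symm
      have h5 : Commute v (T.e (2*n+2)) := T.x_comm_e hv (by omega)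
      have heq : (aa * (T.e (2*n+2) * T.e (2*n+3))) * (u * Pw T.e n * v) * (T.e (2*n+2) * dd)
          = (aa * u) * ((T.e (2*n+2) * (Pw T.e n * (T.e (2*n+3) * T.e (2*n+2)))) * (v * dd)) := by
        simp only [mul_assoc]
        rw [swapR h1, swapR h2, swapR hPE3, swapR h5]
      rw [heq]
      exact hKfull _ (mul_mem haa (T.hmono (by omega) hu)) _
        (mul_mem (T.hmono (by omega) hv) hdd)
    have hx' : x ∈ T.Ms (2*n+2+1) := by
      have h0 : x ∈ T.Ms (2*(n+1)+1) := hx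
      rwa [show 2*(n+1)+1 = 2*n+2+1 by omega] at h0
    refine Submodule.span_le.mpr ?_ (T.mem_spanGen (i := 2*n+2) hx')
    rintro z ⟨p, hp, q, hq, rfl⟩
    have hp1 := T.mem_spanGen (i := 2*n+1)
      (show p ∈ T.Ms (2*n+1+1) by rwa [show 2*n+1+1 = 2*n+2 by omega])
    have hq1 := T.mem_spanGen (i := 2*n+1)
      (show q ∈ T.Ms (2*n+1+1) by rwa [show 2*n+1+1 = 2*n+2 by omega])
    show p * T.e (2*n+2+1) * q ∈ Submodule.span k (SPset T (n+1))
    rw [mul_assoc]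
    refine span_mul_mem hp1 ?_
    rintro z ⟨α, hα, β, hβ, rfl⟩
    rw [show (α * T.e (2*n+1+1) * β) * (T.e (2*n+2+1) * q)
        = ((α * T.e (2*n+1+1) * β) * T.e (2*n+2+1)) * q from (mul_assoc _ _ _).symm]
    refine mem_mul_span hq1 ?_
    rintro z ⟨γ, hγ, δ, hδ, rfl⟩
    have hβ3 : Commute β (T.e (2*n+3)) := T.x_comm_e hβ (by omega)
    have heq2 : ((α * T.e (2*n+1+1) * β) * T.e (2*n+2+1)) * (γ * T.e (2*n+1+1) * δ)
        = (α * (T.e (2*n+2) * T.e (2*n+3))) * (β * γ) * (T.e (2*n+2) * δ) := by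
      rw [show 2*n+1+1 = 2*n+2 by omega, show 2*n+2+1 = 2*n+3 by omega]
      simp only [mul_assoc]
      rw [swapR hβ3]
    rw [heq2]
    exact hcore α hα (β*γ) (mul_mem hβ hγ) δ hδ

theorem master : ∀ (n : ℕ) (T : Tw k R), Isp T n ∧ IIIsp T n := by
  intro n
  induction n with
  | zero => exact fun T => ⟨Ibase T, IIIbase T⟩
  | succ n ih => exact fun T => ⟨Istep T n (ih T).1,
      IIIstep T n (ih T).1 (ih T).2 (ih T.shift).1 (ih T.shift).2⟩

/-! ### the composite expectation of `P_n` -/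

def Cc (Ec : ℕ → R →ₗ[k] R) (a : ℕ) : ℕ → (R →ₗ[k] R)
  | 0 => LinearMap.id
  | ℓ+1 => Ec a ∘ₗ Cc Ec (a+1) ℓ

lemma Cc_zero (Ec : ℕ → R →ₗ[k] R) (a : ℕ) : Cc Ec a 0 = LinearMap.id := rfl

lemma Cc_succ (Ec : ℕ → R →ₗ[k] R) (a ℓ : ℕ) (x : R) :
    Cc Ec a (ℓ+1) x = Ec a (Cc Ec (a+1) ℓ x) := rfl

lemma Tw.Cc_mem (T : Tw k R) : ∀ (ℓ a : ℕ), ∀ x ∈ T.Ms (a+ℓ), Cc T.Ec a ℓ x ∈ T.Ms a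
  | 0, a => fun x hx => hx
  | ℓ+1, a => fun x hx => by
    rw [Cc_succ]
    refine T.hEc_mem a _ (T.Cc_mem ℓ (a+1) x ?_)
    rwa [show a+1+ℓ = a+(ℓ+1) by omega]

theorem IVlem (T : Tw k R) : ∀ n : ℕ, Cc T.Ec n (n+1) (Pw T.e n) = T.lam ^ Tri (n+1) • 1 := by
  intro n
  induction n with
  | zero =>
    rw [Cc_succ, Cc_zero, Pw_zero]
    show T.Ec 0 (T.e 1) = T.lam ^ Tri 1 • 1
    have h := T.hEc_e 0 1 (one_mem _) 1 (one_mem _)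
    rw [one_mul, mul_one, mul_one] at h
    rw [h, show Tri 1 = 1 from rfl, pow_one]
  | succ n ih =>
    have hQ : ∀ j t : ℕ, j + t = n →
        Cc T.Ec (n+t+2) (j+1) (Pw T.e (n+1))
          = T.lam ^ (j+1) • (Ul T.e (n+2) (t+1) *
              (Cc T.Ec (n+t+1) j (Pw T.e n) * Dl T.e (n+2) (t+1))) := by
      intro j
      induction j with
      | zero =>
        intro t ht
        have htn : t = n := by omega
        subst htn
        rw [Cc_succ, Cc_zero]
        simp only [LinearMap.id_coe, id_eq]
        have hB2 : Dl T.e (t+2) (t+2) = T.e (2*t+3) * Dl T.e (t+2) (t+1) := by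
          show T.e ((t+2)+(t+1)) * Dl T.e (t+2) (t+1) = _
          rw [show (t+2)+(t+1) = 2*t+3 by omega]
        have hP1 : Pw T.e (t+1)
            = (Ul T.e (t+2) (t+1) * Pw T.e t) * T.e (2*t+3) * Dl T.e (t+2) (t+1) := by
          rw [W1 T.e T.hcomm t, hB2]
          simp only [mul_assoc]
        have hx1 : Ul T.e (t+2) (t+1) * Pw T.e t ∈ T.Ms (2*t+2) :=
          mul_mem (T.Ul_mem (by omega) (t+1) (by omega)) (T.hmono (by omega) (T.Pw_mem t))
        have hy1 : Dl T.e (t+2) (t+1) ∈ T.Ms (2*t+2) := T.Dl_mem (by omega) (t+1) (by omega)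
        have happ := T.hEc_e (2*t+2) _ hx1 _ hy1
        rw [show 2*t+2+1 = 2*t+3 by omega] at happ
        rw [show t+t+2 = 2*t+2 by omega, hP1, happ, pow_one, Cc_zero]
        simp only [LinearMap.id_coe, id_eq, mul_assoc]
      | succ j ihj =>
        intro t ht
        have ih' := ihj (t+1) (by omega)
        rw [show n+(t+1)+2 = n+t+3 by omega, show n+(t+1)+1 = n+t+2 by omega] at ih'
        rw [Cc_succ, show n+t+2+1 = n+t+3 by omega, ih', map_smul]
        set Zj := Cc T.Ec (n+t+2) j (Pw T.e n) with hZdef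
        have hU : Ul T.e (n+2) (t+2) = Ul T.e (n+2) (t+1) * T.e (n+t+3) := by
          show Ul T.e (n+2) (t+1) * T.e ((n+2)+(t+1)) = _
          rw [show (n+2)+(t+1) = n+t+3 by omega]
        have hD : Dl T.e (n+2) (t+2) = T.e (n+t+3) * Dl T.e (n+2) (t+1) := by
          show T.e ((n+2)+(t+1)) * Dl T.e (n+2) (t+1) = _
          rw [show (n+2)+(t+1) = n+t+3 by omega]
        have hZmem : Zj ∈ T.Ms (n+t+2) := by
          refine T.Cc_mem j (n+t+2) _ ?_
          have h0 := T.Pw_mem n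
          rwa [show 2*n+1 = n+t+2+j by omega] at h0
        have hjn : T.e (n+t+3) * Zj * T.e (n+t+3) = T.Ec (n+t+1) Zj * T.e (n+t+3) := by
          have h := T.hjones (n+t+1) Zj (by rwa [show n+t+1+1 = n+t+2 by omega])
          rwa [show n+t+1+2 = n+t+3 by omega] at h
        have hZ2 : T.Ec (n+t+1) Zj = Cc T.Ec (n+t+1) (j+1) (Pw T.e n) := by
          rw [Cc_succ, show n+t+1+1 = n+t+2 by omega]
        have hre : Ul T.e (n+2) (t+2) * (Zj * Dl T.e (n+2) (t+2))
            = (Ul T.e (n+2) (t+1) * T.Ec (n+t+1) Zj) * T.e (n+t+3) * Dl T.e (n+2) (t+1) := by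
          rw [hU, hD]
          calc (Ul T.e (n+2) (t+1) * T.e (n+t+3)) * (Zj * (T.e (n+t+3) * Dl T.e (n+2) (t+1)))
              = Ul T.e (n+2) (t+1) * ((T.e (n+t+3) * Zj * T.e (n+t+3)) * Dl T.e (n+2) (t+1)) := by
                simp only [mul_assoc]
            _ = Ul T.e (n+2) (t+1) * ((T.Ec (n+t+1) Zj * T.e (n+t+3)) * Dl T.e (n+2) (t+1)) := by
                rw [hjn]
            _ = _ := by simp only [mul_assoc]
        rw [hre]
        have hxm : Ul T.e (n+2) (t+1) * T.Ec (n+t+1) Zj ∈ T.Ms (n+t+2) := by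
          refine mul_mem (T.Ul_mem (by omega) (t+1) (by omega))
            (T.hmono (by omega) (T.hEc_mem (n+t+1) _ ?_))
          rwa [show n+t+1+1 = n+t+2 by omega]
        have hym : Dl T.e (n+2) (t+1) ∈ T.Ms (n+t+2) := T.Dl_mem (by omega) (t+1) (by omega)
        have happ := T.hEc_e (n+t+2) _ hxm _ hym
        rw [show n+t+2+1 = n+t+3 by omega] at happ
        rw [happ, hZ2, smul_smul, ← pow_succ, show j+1+1 = j+2 from rfl]
        simp only [mul_assoc]
    have hfin := hQ n 0 (by omega)
    rw [show n+0+2 = n+2 by omega, show n+0+1 = n+1 by omega, Ul_one, Dl_one] at hfin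
    rw [Cc_succ, show n+1+1 = n+2 by omega, hfin, map_smul]
    set Zn := Cc T.Ec (n+1) n (Pw T.e n) with hZn
    have hZmem : Zn ∈ T.Ms (n+1) := by
      refine T.Cc_mem n (n+1) _ ?_
      have h0 := T.Pw_mem n
      rwa [show 2*n+1 = n+1+n by omega] at h0
    have hjn : T.e (n+2) * Zn * T.e (n+2) = T.Ec n Zn * T.e (n+2) := T.hjones n Zn hZmem
    have hEcZ : T.Ec n Zn = Cc T.Ec n (n+1) (Pw T.e n) := by rw [Cc_succ]
    have h1 : T.e (n+2) * (Zn * T.e (n+2)) = T.lam ^ Tri (n+1) • T.e (n+2) := by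
      rw [← mul_assoc, hjn, hEcZ, ih, smul_mul_assoc, one_mul]
    rw [h1, map_smul]
    have happ := T.hEc_e (n+1) 1 (one_mem _) 1 (one_mem _)
    rw [one_mul, mul_one, mul_one] at happ
    rw [show n+1+1 = n+2 by omega] at happ
    rw [happ, smul_smul, smul_smul]
    congr 1
    rw [show Tri (n+2) = Tri (n+1) + (n+2) from rfl, pow_add]
    ring

/-! ### bridges to the list-based definitions -/

lemma listD (e : ℕ → R) (a : ℕ) : ∀ ℓ : ℕ,
    ((List.range ℓ).map (fun i => e (a + ℓ - 1 - i))).prod = Dl e a ℓ := by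
  intro ℓ
  induction ℓ with
  | zero => rfl
  | succ ℓ ih =>
    rw [List.range_succ_eq_map, List.map_cons, List.prod_cons, List.map_map]
    rw [show a + (ℓ+1) - 1 - 0 = a + ℓ by omega]
    rw [show ((fun i => e (a + (ℓ+1) - 1 - i)) ∘ Nat.succ) = (fun i => e (a + ℓ - 1 - i))
      from funext fun i => by
        show e (a + (ℓ+1) - 1 - (i+1)) = e (a + ℓ - 1 - i)
        congr 1
        omega]
    rw [ih]
    rfl

lemma listP (e : ℕ → R) (n : ℕ) : ∀ m : ℕ,
    ((List.range m).map (fun j =>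
      ((List.range (n+1)).map (fun i => e (n + 1 + j - i))).prod)).prod = Pr e n m := by
  intro m
  induction m with
  | zero => rfl
  | succ m ih =>
    rw [show List.range (m+1) = List.range m ++ [m] from List.range_succ,
      List.map_append, List.prod_append, List.map_singleton, List.prod_singleton, ih]
    show Pr e n m * _ = Pr e n m * Dl e (m+1) (n+1)
    congr 1
    rw [show (fun i => e (n + 1 + m - i)) = (fun i => e ((m+1) + (n+1) - 1 - i))
      from funext fun i => by congr 1; omega]
    exact listD e (m+1) (n+1)

lemma listC (Ec : ℕ → R →ₗ[k] R) : ∀ (ℓ a : ℕ),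
    ((List.range ℓ).map (fun i => Ec (a+i))).foldr (· ∘ₗ ·) LinearMap.id = Cc Ec a ℓ := by
  intro ℓ
  induction ℓ with
  | zero => intro a; rfl
  | succ ℓ ih =>
    intro a
    rw [List.range_succ_eq_map, List.map_cons, List.foldr_cons, List.map_map]
    rw [show ((fun i => Ec (a+i)) ∘ Nat.succ) = (fun i => Ec ((a+1)+i))
      from funext fun i => by
        show Ec (a + (i+1)) = Ec ((a+1)+i)
        congr 1
        omega]
    rw [ih (a+1)]
    rfl

lemma fIdem_eq (lam : k) (e : ℕ → R) (n : ℕ) :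
    fIdem lam e n = (lam⁻¹ ^ Tri n) • Pw e n := by
  unfold fIdem
  rw [show n*(n+1)/2 = Tri n from (Tri_eq n).symm]
  rw [show Pw e n = Pr e n (n+1) from rfl, ← listP e n (n+1)]

lemma Gcomp_eq (Ec : ℕ → R →ₗ[k] R) (n : ℕ) : Gcomp Ec n = Cc Ec n (n+1) := by
  unfold Gcomp
  exact listC Ec (n+1) n

end PP

/-- composite basic construction: for a strongly separable extension
`N ⊆ M₀` of index `λ⁻¹` with Jones tower `N ⊆ M₀ ⊆ M₁ ⊆ ⋯` (inside an ambient
algebra `R`), for each `n ≥ 0` the element `f_n` is an idempotent satisfying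
`M_{2n+1} = M_n f_n M_n`, `f_n x f_n = f_n F_n(x) = F_n(x) f_n` for all `x ∈ M_n`,
and `F_{M_n}(f_n) = λ^{n+1} 1`; hence `M_{2n+1}`, with idempotent `f_n` and
conditional expectation `F_{M_n}`, realizes the basic construction of the composite
conditional expectation `F_n : M_n → N`. -/
theorem stmt19 {k : Type*} [Field k] {R : Type*} [Ring R] [Algebra k R]
    (N : Subalgebra k R) (Ms : ℕ → Subalgebra k R) (e : ℕ → R)
    (E : R →ₗ[k] R) (Ec : ℕ → R →ₗ[k] R) (lam : k) (hlam : lam ≠ 0)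
    (hNM : N ≤ Ms 0) (hmono : Monotone Ms)
    -- strongly separable extension data for E : M₀ → N
    (nE : ℕ) (xb yb : Fin nE → R)
    (hxb : ∀ i, xb i ∈ Ms 0) (hyb : ∀ i, yb i ∈ Ms 0)
    (hE_mem : ∀ x ∈ Ms 0, E x ∈ N) (hE_one : E 1 = 1)
    (hE_left : ∀ y ∈ N, ∀ x ∈ Ms 0, E (y * x) = y * E x)
    (hE_right : ∀ y ∈ N, ∀ x ∈ Ms 0, E (x * y) = E x * y)
    (hdual1 : ∀ m ∈ Ms 0, ∑ i, E (m * xb i) * yb i = m)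
    (hdual2 : ∀ m ∈ Ms 0, ∑ i, xb i * E (yb i * m) = m)
    (hindex : ∑ i, xb i * yb i = lam⁻¹ • (1 : R))
    -- the Jones tower: M_{i+1} = M_i e_{i+1} M_i with conditional expectations
    (he_mem : ∀ i, e (i + 1) ∈ Ms (i + 1))
    (he_idem : ∀ i, e (i + 1) * e (i + 1) = e (i + 1))
    (hgen : ∀ i, (Ms (i + 1)).toSubmodule
      = Submodule.span k {z : R | ∃ a ∈ Ms i, ∃ b ∈ Ms i, z = a * e (i + 1) * b})
    (hEc_mem : ∀ i, ∀ x ∈ Ms (i + 1), Ec i x ∈ Ms i)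
    (hEc_one : ∀ i, Ec i 1 = 1)
    (hEc_left : ∀ i, ∀ m ∈ Ms i, ∀ x ∈ Ms (i + 1), Ec i (m * x) = m * Ec i x)
    (hEc_right : ∀ i, ∀ m ∈ Ms i, ∀ x ∈ Ms (i + 1), Ec i (x * m) = Ec i x * m)
    (hEc_e : ∀ i, ∀ x ∈ Ms i, ∀ y ∈ Ms i, Ec i (x * e (i + 1) * y) = lam • (x * y))
    -- e_{i+1} x e_{i+1} = E_{M_{i-1}}(x) e_{i+1} for x ∈ M_i
    (hjones0 : ∀ x ∈ Ms 0, e 1 * x * e 1 = E x * e 1)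
    (hjones : ∀ i, ∀ x ∈ Ms (i + 1), e (i + 2) * x * e (i + 2) = Ec i x * e (i + 2))
    -- the braid-like relations
    (hbraid1 : ∀ i, 1 ≤ i → e i * e (i + 1) * e i = lam • e i)
    (hbraid2 : ∀ i, 1 ≤ i → e (i + 1) * e i * e (i + 1) = lam • e (i + 1))
    (hcomm : ∀ i j, 1 ≤ i → i + 2 ≤ j → e i * e j = e j * e i)
    -- the Jones idempotents commute with the lower algebras
    (he1_N : ∀ y ∈ N, e 1 * y = y * e 1)
    (hcommM : ∀ i, ∀ x ∈ Ms i, e (i + 2) * x = x * e (i + 2)) :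
    ∀ n : ℕ,
      fIdem lam e n * fIdem lam e n = fIdem lam e n ∧
      (Ms (2 * n + 1)).toSubmodule
        = Submodule.span k {z : R | ∃ a ∈ Ms n, ∃ b ∈ Ms n,
            z = a * fIdem lam e n * b} ∧
      (∀ x ∈ Ms n,
        fIdem lam e n * x * fIdem lam e n = fIdem lam e n * Fcomp E Ec n x ∧
        fIdem lam e n * Fcomp E Ec n x = Fcomp E Ec n x * fIdem lam e n) ∧
      Gcomp Ec n (fIdem lam e n) = lam ^ (n + 1) • (1 : R) := by
  intro n
  let T₀ : PP.Tw k R :=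
    ⟨N, Ms, e, E, Ec, lam, hlam, hNM, hmono, hE_mem, hE_one, he_mem, he_idem, hgen,
     hEc_mem, hEc_one, hEc_e, hjones0, hjones, hbraid2, hcomm, he1_N, hcommM⟩
  have hI : ∀ x ∈ Ms n, PP.Pw e n * x * PP.Pw e n
      = (lam ^ PP.Tri n) • (T₀.Fcl n x * PP.Pw e n) := (PP.master n T₀).1
  have hIII : (Ms (2*n+1)).toSubmodule = Submodule.span k
      {z : R | ∃ a ∈ Ms n, ∃ b ∈ Ms n, z = a * PP.Pw e n * b} := (PP.master n T₀).2
  have hIV : PP.Cc Ec n (n+1) (PP.Pw e n) = lam ^ PP.Tri (n+1) • 1 := PP.IVlem T₀ n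
  have hfeq := PP.fIdem_eq lam e n
  have hgeq := PP.Gcomp_eq (k := k) (R := R) Ec n
  have hFcomp : ∀ m : ℕ, Fcomp E Ec m = T₀.Fcl m := by
    intro m
    induction m with
    | zero => rfl
    | succ m ih =>
      show Fcomp E Ec m ∘ₗ Ec m = T₀.Fcl m ∘ₗ T₀.Ec m
      rw [ih]
  have hμinv : (lam⁻¹ ^ PP.Tri n) * lam ^ PP.Tri n = 1 := by
    rw [inv_pow, inv_mul_cancel₀ (pow_ne_zero _ hlam)]
  have hscal : (lam⁻¹ ^ PP.Tri n) * (lam⁻¹ ^ PP.Tri n) * lam ^ PP.Tri n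
      = lam⁻¹ ^ PP.Tri n := by
    rw [mul_assoc, hμinv, mul_one]
  refine ⟨?_, ?_, ?_, ?_⟩
  · -- idempotency
    have hPP : PP.Pw e n * PP.Pw e n = lam ^ PP.Tri n • PP.Pw e n := by
      have h := hI 1 (one_mem _)
      rw [mul_one, T₀.Fcl_one n, one_mul] at h
      exact h
    rw [hfeq, smul_mul_assoc, mul_smul_comm, hPP, smul_smul, smul_smul, hscal]
  · -- the span statement
    have hPf : PP.Pw e n = (lam ^ PP.Tri n) • fIdem lam e n := by
      rw [hfeq, smul_smul, show lam ^ PP.Tri n * lam⁻¹ ^ PP.Tri n = 1 by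
        rw [inv_pow, mul_inv_cancel₀ (pow_ne_zero _ hlam)], one_smul]
    refine hIII.trans (le_antisymm ?_ ?_)
    · refine Submodule.span_le.mpr ?_
      rintro z ⟨a, ha, b, hb, rfl⟩
      rw [hPf, mul_smul_comm, smul_mul_assoc]
      exact Submodule.smul_mem _ _ (Submodule.subset_span ⟨a, ha, b, hb, rfl⟩)
    · refine Submodule.span_le.mpr ?_
      rintro z ⟨a, ha, b, hb, rfl⟩
      rw [hfeq, mul_smul_comm, smul_mul_assoc]
      exact Submodule.smul_mem _ _ (Submodule.subset_span ⟨a, ha, b, hb, rfl⟩)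
  · -- f x f = f F(x) = F(x) f
    intro x hx
    have hFx : Fcomp E Ec n x = T₀.Fcl n x := by rw [hFcomp n]
    have hc : Commute (T₀.Fcl n x) (PP.Pw e n) := T₀.N_comm_Pw (T₀.Fcl_mem n x hx) n
    constructor
    · rw [hfeq, hFx]
      have hval : lam⁻¹ ^ PP.Tri n • PP.Pw e n * x * (lam⁻¹ ^ PP.Tri n • PP.Pw e n)
          = (lam⁻¹ ^ PP.Tri n) • (T₀.Fcl n x * PP.Pw e n) := by
        rw [smul_mul_assoc, smul_mul_assoc, mul_smul_comm, hI x hx, smul_smul, smul_smul,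
          hscal]
      have hval2 : lam⁻¹ ^ PP.Tri n • PP.Pw e n * T₀.Fcl n x
          = (lam⁻¹ ^ PP.Tri n) • (T₀.Fcl n x * PP.Pw e n) := by
        rw [smul_mul_assoc, ← hc.eq]
      rw [hval, hval2]
    · rw [hfeq, hFx, smul_mul_assoc, mul_smul_comm, hc.eq]
  · -- the composite expectation of f
    rw [hfeq, hgeq, map_smul, hIV, smul_smul]
    congr 1
    rw [show PP.Tri (n+1) = PP.Tri n + (n+1) from rfl, pow_add, inv_pow, ← mul_assoc,
      inv_mul_cancel₀ (pow_ne_zero _ hlam), one_mul]
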